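/- arXiv:0906.3416 — 2 statements merged into one kernel-verified Lean document; each statement's English description precedes it below -/
import Mathlib

section
/- Let (X, T, μ) be a measure-preserving dynamical system on a probability space and let f : X → [0,∞) be Borel measurable. For r > 0 set S_r = {x ∈ X : f(x) ≤ r} and let τ(x, S_r) = min{n ∈ ℕ⁺ : Tⁿ(x) ∈ S_r} denote the hitting time. Then for μ-almost every x ∈ X, limsup_{r→0} log τ(x, S_r) / (−log r) ≥ limsup_{r→0} log μ(S_r) / log r. -/
open Filter MeasureTheory Metric Set Topology ENNReal

/-- Hitting time of the set `S` for the orbit of `x` under `T`: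
`τ(x,S) = min {n ∈ ℕ⁺ : Tⁿ x ∈ S}`, equal to `⊤` if the orbit never enters `S`. -/
noncomputable def hitTime {X : Type*} (T : X → X) (S : Set X) (x : X) : ℕ∞ :=
  sInf ((fun n : ℕ => (n : ℕ∞)) '' {n : ℕ | 0 < n ∧ T^[n] x ∈ S})

lemma hitTime_le_iff {X : Type*} {T : X → X} {S : Set X} {x : X} {n : ℕ} :
    hitTime T S x ≤ (n : ℕ∞) ↔ ∃ j, 0 < j ∧ j ≤ n ∧ T^[j] x ∈ S := by
  constructor
  · intro h
    by_contra hc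
    push_neg at hc
    have : ((n + 1 : ℕ) : ℕ∞) ≤ hitTime T S x := by
      refine le_sInf ?_
      rintro m ⟨j, ⟨hj0, hjS⟩, rfl⟩
      have := hc j hj0
      show ((n+1:ℕ) : ℕ∞) ≤ (j : ℕ∞)
      exact_mod_cast Nat.succ_le_of_lt (lt_of_not_ge (fun hle => (this hle) hjS))
    have h2 : ((n + 1 : ℕ) : ℕ∞) ≤ (n : ℕ∞) := this.trans h
    exact absurd (Nat.cast_le.mp h2) (by omega)
  · rintro ⟨j, hj0, hjn, hjS⟩
    have h1 : hitTime T S x ≤ (j : ℕ∞) := sInf_le ⟨j, ⟨hj0, hjS⟩, rfl⟩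
    exact h1.trans (by exact_mod_cast hjn)

lemma one_le_hitTime {X : Type*} {T : X → X} {S : Set X} {x : X} :
    1 ≤ hitTime T S x := by
  refine le_sInf ?_
  rintro m ⟨j, ⟨hj0, _⟩, rfl⟩
  show (1:ℕ∞) ≤ (j:ℕ∞)
  exact_mod_cast hj0

lemma measure_hitTime_le {X : Type*} [MeasurableSpace X] {μ : Measure X}
    {T : X → X} (hT : MeasurePreserving T μ μ) {S : Set X} (hS : MeasurableSet S) (n : ℕ) :
    μ {x | hitTime T S x ≤ (n : ℕ∞)} ≤ n * μ S := by
  have hsub : {x | hitTime T S x ≤ (n : ℕ∞)} ⊆ ⋃ j ∈ Finset.Icc 1 n, T^[j] ⁻¹' S := by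
    intro x hx
    obtain ⟨j, hj0, hjn, hjS⟩ := hitTime_le_iff.mp hx
    exact mem_biUnion (Finset.mem_Icc.mpr ⟨hj0, hjn⟩) hjS
  calc μ {x | hitTime T S x ≤ (n : ℕ∞)} ≤ μ (⋃ j ∈ Finset.Icc 1 n, T^[j] ⁻¹' S) :=
        measure_mono hsub
    _ ≤ ∑ j ∈ Finset.Icc 1 n, μ (T^[j] ⁻¹' S) := measure_biUnion_finset_le _ _
    _ = ∑ j ∈ Finset.Icc 1 n, μ S := by
        refine Finset.sum_congr rfl fun j _ => ?_
        exact (hT.iterate j).measure_preimage hS.nullMeasurableSet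
    _ = n * μ S := by simp [Nat.card_Icc, mul_comm]

-- Step 0 : limsup of the hitting quotient is ≥ 0, for every x
lemma limsup_H_nonneg {X : Type*} (T : X → X) (f : X → ℝ) (x : X) :
    0 ≤ limsup (fun r : ℝ =>
        ENNReal.log ((hitTime T {y | f y ≤ r} x : ℝ≥0∞)) / ((- Real.log r : ℝ) : EReal))
      (𝓝[>] (0:ℝ)) := by
  refine le_limsup_of_frequently_le ?_
  have hev : ∀ᶠ r in 𝓝[>] (0:ℝ), (0:EReal) ≤
      ENNReal.log ((hitTime T {y | f y ≤ r} x : ℝ≥0∞)) / ((- Real.log r : ℝ) : EReal) := by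
    filter_upwards [Ioo_mem_nhdsGT_of_mem (by constructor <;> norm_num : (0:ℝ) ∈ Ico 0 1)]
      with r hr
    refine EReal.div_nonneg ?_ ?_
    · rw [ENNReal.zero_le_log_iff]
      calc (1:ℝ≥0∞) = ((1:ℕ∞) : ℝ≥0∞) := by simp
        _ ≤ _ := ENat.toENNReal_le.mpr one_le_hitTime
    · exact_mod_cast neg_nonneg.mpr (Real.log_nonpos hr.1.le hr.2.le)
  exact hev.frequently

-- key lemma
lemma key_lemma {X : Type*} [MeasurableSpace X] (μ : Measure X) [IsProbabilityMeasure μ]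
    (T : X → X) (hT : MeasurePreserving T μ μ)
    (f : X → ℝ) (hf : Measurable f) (q a : ℝ) (hq : 0 < q) (hqa : q < a)
    (hfreq : ∃ᶠ r in 𝓝[>] (0:ℝ),
      (a : EReal) < ENNReal.log (μ {y | f y ≤ r}) / ((Real.log r : ℝ) : EReal)) :
    ∀ᵐ x ∂μ, (q : EReal) ≤ limsup (fun r : ℝ =>
        ENNReal.log ((hitTime T {y | f y ≤ r} x : ℝ≥0∞)) / ((- Real.log r : ℝ) : EReal))
      (𝓝[>] (0:ℝ)) := by
  set δ : ℝ := a - q with hδ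
  have hδ0 : 0 < δ := by simp [hδ]; linarith
  -- choose the sequence r k
  have hseq : ∀ k : ℕ, ∃ r : ℝ, (0 < r ∧ r ≤ (1/2) ^ (k+1)) ∧
      (a : EReal) < ENNReal.log (μ {y | f y ≤ r}) / ((Real.log r : ℝ) : EReal) := by
    intro k
    have hIoc : Ioc (0:ℝ) ((1/2) ^ (k+1)) ∈ 𝓝[>] (0:ℝ) :=
      Ioc_mem_nhdsGT_of_mem ⟨le_refl 0, by positivity⟩
    obtain ⟨r, hr1, hr2⟩ := (hfreq.and_eventually (eventually_of_mem hIoc fun r hr => hr)).exists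
    exact ⟨r, ⟨hr2.1, hr2.2⟩, hr1⟩
  choose r hr hra using hseq
  have hrpos : ∀ k, 0 < r k := fun k => (hr k).1
  have hrle : ∀ k, r k ≤ (1/2) ^ (k+1) := fun k => (hr k).2
  have hrlt1 : ∀ k, r k < 1 := fun k =>
    lt_of_le_of_lt (hrle k) (pow_lt_one₀ (by norm_num) (by norm_num) (Nat.succ_ne_zero k))
  -- measure bound on sublevel sets
  have hμS : ∀ k, μ {y | f y ≤ r k} < (ENNReal.ofReal (r k)) ^ a := by
    intro k
    set c : ℝ := Real.log (r k) with hc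
    have hcneg : c < 0 := Real.log_neg (hrpos k) (hrlt1 k)
    have hXlt : ENNReal.log (μ {y | f y ≤ r k}) < ((a * c : ℝ) : EReal) := by
      by_contra hcon
      push_neg at hcon
      have h1 : ENNReal.log (μ {y | f y ≤ r k}) / ((c:ℝ) : EReal) ≤
          ((a * c : ℝ) : EReal) / ((c:ℝ) : EReal) :=
        EReal.div_le_div_right_of_nonpos (by exact_mod_cast hcneg.le) hcon
      have h2 : ((a * c : ℝ) : EReal) / ((c:ℝ) : EReal) = (a : EReal) := by
        rw [← EReal.coe_div, mul_div_assoc, div_self hcneg.ne, mul_one]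
      rw [h2] at h1
      exact absurd (hra k) (not_lt.mpr h1)
    have h3 : ((a * c : ℝ) : EReal) = ENNReal.log ((ENNReal.ofReal (r k)) ^ a) := by
      rw [ENNReal.log_rpow, ENNReal.log_ofReal_of_pos (hrpos k)]
      exact_mod_cast rfl
    rw [h3] at hXlt
    exact ENNReal.log_lt_log_iff.mp hXlt
  -- the bad sets
  set n : ℕ → ℕ := fun k => ⌈(r k) ^ (-q)⌉₊ with hn
  set bad : ℕ → Set X := fun k => {x | hitTime T {y | f y ≤ r k} x ≤ (n k : ℕ∞)} with hbad
  set ρ : ℝ≥0∞ := ENNReal.ofReal ((1/2) ^ δ) with hρ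
  have hρ1 : ρ < 1 := by
    rw [hρ, ← ENNReal.ofReal_one]
    exact ENNReal.ofReal_lt_ofReal_iff_of_nonneg (by positivity) |>.mpr
      (Real.rpow_lt_one (by norm_num) (by norm_num) hδ0)
  have hbadineq : ∀ k, μ (bad k) ≤ 2 * ρ ^ (k+1) := by
    intro k
    have hS : MeasurableSet {y | f y ≤ r k} := hf measurableSet_Iic
    have h1 : μ (bad k) ≤ (n k) * μ {y | f y ≤ r k} := measure_hitTime_le hT hS (n k)
    have h2 : ((n k : ℕ) : ℝ≥0∞) ≤ ENNReal.ofReal ((r k) ^ (-q) + 1) := by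
      rw [← ENNReal.ofReal_natCast]
      exact ENNReal.ofReal_le_ofReal (Nat.ceil_lt_add_one (by have := hrpos k; positivity)).le
    have h3 : μ (bad k) ≤ ENNReal.ofReal (((r k) ^ (-q) + 1) * (r k) ^ a) := by
      calc μ (bad k) ≤ (n k) * μ {y | f y ≤ r k} := h1
        _ ≤ ENNReal.ofReal ((r k) ^ (-q) + 1) * ENNReal.ofReal ((r k) ^ a) := by
            refine mul_le_mul' h2 ?_
            rw [← ENNReal.ofReal_rpow_of_pos (hrpos k)]
            exact (hμS k).le
        _ = ENNReal.ofReal (((r k) ^ (-q) + 1) * (r k) ^ a) :=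
            (ENNReal.ofReal_mul (by have := hrpos k; positivity)).symm
    have h4 : ((r k) ^ (-q) + 1) * (r k) ^ a ≤ 2 * ((1/2) ^ δ) ^ (k+1) := by
      have e1 : (r k) ^ (-q) * (r k) ^ a = (r k) ^ δ := by
        rw [← Real.rpow_add (hrpos k), hδ]; ring_nf
      have e2 : (r k) ^ a ≤ (r k) ^ δ :=
        Real.rpow_le_rpow_of_exponent_ge (hrpos k) (hrlt1 k).le (by linarith)
      have e3 : (r k) ^ δ ≤ ((1/2 : ℝ) ^ (k+1)) ^ δ :=
        Real.rpow_le_rpow (hrpos k).le (hrle k) hδ0.le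
      have e4 : ((1/2 : ℝ) ^ (k+1)) ^ δ = ((1/2 : ℝ) ^ δ) ^ (k+1) := by
        rw [← Real.rpow_natCast (1/2 : ℝ) (k+1), ← Real.rpow_mul (by norm_num),
          mul_comm, Real.rpow_mul (by norm_num), Real.rpow_natCast]
      calc ((r k) ^ (-q) + 1) * (r k) ^ a = (r k) ^ (-q) * (r k) ^ a + (r k) ^ a := by ring
        _ = (r k) ^ δ + (r k) ^ a := by rw [e1]
        _ ≤ (r k) ^ δ + (r k) ^ δ := by linarith
        _ = 2 * (r k) ^ δ := by ring
        _ ≤ 2 * ((1/2 : ℝ) ^ δ) ^ (k+1) := by rw [← e4]; linarith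
    calc μ (bad k) ≤ ENNReal.ofReal (((r k) ^ (-q) + 1) * (r k) ^ a) := h3
      _ ≤ ENNReal.ofReal (2 * ((1/2) ^ δ) ^ (k+1)) := ENNReal.ofReal_le_ofReal h4
      _ = 2 * ρ ^ (k+1) := by
          rw [ENNReal.ofReal_mul (by norm_num), ENNReal.ofReal_pow (by have := hrpos k; positivity)]
          norm_num [hρ]
  -- summability
  have hsum : (∑' k, μ (bad k)) ≠ ⊤ := by
    have h1 : (∑' k, μ (bad k)) ≤ ∑' k : ℕ, 2 * ρ ^ (k+1) := ENNReal.tsum_le_tsum hbadineq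
    have h2 : ∑' k : ℕ, 2 * ρ ^ (k+1) = 2 * ρ * (1 - ρ)⁻¹ := by
      have : ∀ k : ℕ, 2 * ρ ^ (k+1) = (2 * ρ) * ρ ^ k := fun k => by ring
      simp_rw [this]
      rw [ENNReal.tsum_mul_left, ENNReal.tsum_geometric]
    refine ne_top_of_le_ne_top ?_ (h1.trans_eq h2)
    refine ENNReal.mul_ne_top (ENNReal.mul_ne_top (by norm_num) ?_) ?_
    · exact ne_of_lt (hρ1.trans (by norm_num))
    · exact ENNReal.inv_ne_top.mpr (by simpa [tsub_eq_zero_iff_le] using hρ1.not_ge)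
  -- Borel–Cantelli and conclusion
  filter_upwards [ae_eventually_notMem hsum] with x hx
  have hev : ∀ᶠ k in atTop, (q : EReal) ≤
      ENNReal.log ((hitTime T {y | f y ≤ r k} x : ℝ≥0∞)) / ((- Real.log (r k) : ℝ) : EReal) := by
    filter_upwards [hx] with k hk
    have hlt : (n k : ℕ∞) < hitTime T {y | f y ≤ r k} x := lt_of_not_ge hk
    have hd : (0:ℝ) < - Real.log (r k) := by
      have := Real.log_neg (hrpos k) (hrlt1 k); linarith
    rw [EReal.le_div_iff_mul_le (by exact_mod_cast hd) (EReal.coe_ne_top _)]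
    have h5 : ENNReal.ofReal ((r k) ^ (-q)) ≤ ((hitTime T {y | f y ≤ r k} x : ℕ∞) : ℝ≥0∞) := by
      calc ENNReal.ofReal ((r k) ^ (-q)) ≤ ENNReal.ofReal ((n k : ℕ) : ℝ) :=
            ENNReal.ofReal_le_ofReal (Nat.le_ceil _)
        _ = ((n k : ℕ∞) : ℝ≥0∞) := by rw [ENNReal.ofReal_natCast]; simp
        _ ≤ _ := ENat.toENNReal_le.mpr hlt.le
    have h6 : ((q * (- Real.log (r k)) : ℝ) : EReal) =
        ENNReal.log (ENNReal.ofReal ((r k) ^ (-q))) := by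
      rw [ENNReal.log_ofReal_of_pos (by have := hrpos k; positivity), Real.log_rpow (hrpos k)]
      norm_num
    calc (q : EReal) * ((- Real.log (r k) : ℝ) : EReal)
        = ((q * (- Real.log (r k)) : ℝ) : EReal) := by rw [EReal.coe_mul]
      _ = ENNReal.log (ENNReal.ofReal ((r k) ^ (-q))) := h6
      _ ≤ ENNReal.log ((hitTime T {y | f y ≤ r k} x : ℕ∞) : ℝ≥0∞) :=
          ENNReal.log_le_log_iff.mpr h5
  have htend : Tendsto r atTop (𝓝[>] (0:ℝ)) := by
    refine tendsto_nhdsWithin_of_tendsto_nhds_of_eventually_within _ ?_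
      (Eventually.of_forall hrpos)
    refine squeeze_zero (fun k => (hrpos k).le) hrle ?_
    exact (_root_.tendsto_pow_atTop_nhds_zero_of_lt_one (by norm_num) (by norm_num)).comp
      (tendsto_add_atTop_nat 1)
  exact le_limsup_of_frequently_le (htend.frequently hev.frequently)



/-- In a measure-preserving system on a probability space, for a measurable
`f : X → [0,∞)` with sublevel sets `S_r = {x : f x ≤ r}`, for `μ`-a.e. `x` one has
`limsup_{r→0} log τ(x,S_r)/(-log r) ≥ limsup_{r→0} log μ(S_r)/log r`. -/
theorem hitting_limsup_ge_limsup_dim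
    {X : Type*} [MeasurableSpace X] (μ : Measure X) [IsProbabilityMeasure μ]
    (T : X → X) (hT : MeasurePreserving T μ μ)
    (f : X → ℝ) (hf : Measurable f) (hf0 : ∀ x, 0 ≤ f x) :
    ∀ᵐ x ∂μ,
      limsup (fun r : ℝ =>
          ENNReal.log ((hitTime T {y | f y ≤ r} x : ℝ≥0∞)) / ((- Real.log r : ℝ) : EReal))
        (𝓝[>] 0)
      ≥ limsup (fun r : ℝ =>
          ENNReal.log (μ {y | f y ≤ r}) / ((Real.log r : ℝ) : EReal)) (𝓝[>] 0) := by
  set L : EReal := limsup (fun r : ℝ =>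
      ENNReal.log (μ {y | f y ≤ r}) / ((Real.log r : ℝ) : EReal)) (𝓝[>] 0) with hL
  have key2 : ∀ q : ℚ, ((q : ℝ) : EReal) < L →
      ∀ᵐ x ∂μ, ((q : ℝ) : EReal) ≤ limsup (fun r : ℝ =>
          ENNReal.log ((hitTime T {y | f y ≤ r} x : ℝ≥0∞)) / ((- Real.log r : ℝ) : EReal))
        (𝓝[>] 0) := by
    intro q hqL
    by_cases hq : 0 < (q : ℝ)
    · obtain ⟨a, ha1, ha2⟩ := EReal.exists_rat_btwn_of_lt hqL
      have hfreq := frequently_lt_of_lt_limsup (u := fun r : ℝ =>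
          ENNReal.log (μ {y | f y ≤ r}) / ((Real.log r : ℝ) : EReal)) (by isBoundedDefault) ha2
      exact key_lemma μ T hT f hf (q : ℝ) (a : ℝ) hq (EReal.coe_lt_coe_iff.mp ha1) hfreq
    · refine ae_of_all _ fun x => le_trans ?_ (limsup_H_nonneg T f x)
      exact_mod_cast not_lt.mp hq
  have hall : ∀ᵐ x ∂μ, ∀ q : ℚ, ((q : ℝ) : EReal) < L →
      ((q : ℝ) : EReal) ≤ limsup (fun r : ℝ =>
          ENNReal.log ((hitTime T {y | f y ≤ r} x : ℝ≥0∞)) / ((- Real.log r : ℝ) : EReal))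
        (𝓝[>] 0) := by
    rw [ae_all_iff]
    intro q
    by_cases h : ((q : ℝ) : EReal) < L
    · exact (key2 q h).mono fun x hx _ => hx
    · exact ae_of_all _ fun x hx => absurd hx h
  filter_upwards [hall] with x hx
  by_contra hc
  rw [ge_iff_le, not_le] at hc
  obtain ⟨q, h1, h2⟩ := EReal.exists_rat_btwn_of_lt hc
  exact absurd (hx q h2) (not_le.mpr h1)
end

section
/- Let (X, d) be a metric space, μ a Borel probability measure, and T : X → X a measure-preserving map having superpolynomial decay of correlations with respect to Lipschitz observables. Let f : X → [0,∞) be ℓ-Lipschitz, set S_r = {x : f(x) ≤ r}, and suppose the limit d(f) = lim_{r→0} log μ(S_r)/log r exists. Then for μ-almost every x ∈ X, limsup_{r→0} log τ(x, S_r) / (−log r) ≤ d(f). -/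
open Filter MeasureTheory Metric Set Topology ENNReal NNReal

/-- Superpolynomial decay of correlations with respect to Lipschitz observables: there is
`Φ : ℕ → [0,∞)` with `n^α Φ(n) → 0` for every `α > 0` such that
`|∫ φ∘Tⁿ ψ dμ − ∫φ dμ ∫ψ dμ| ≤ ‖φ‖ ‖ψ‖ Φ(n)` for all Lipschitz `φ, ψ : X → ℝ`, where `‖φ‖`
is the Lipschitz norm (the supremum norm plus the Lipschitz constant). -/
def SuperpolynomialDecayOfCorrelations {X : Type*} [MetricSpace X] [MeasurableSpace X]
    (μ : MeasureTheory.Measure X) (T : X → X) : Prop :=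
  ∃ Φ : ℕ → ℝ, (∀ n, 0 ≤ Φ n) ∧
    (∀ α : ℝ, 0 < α → Tendsto (fun n : ℕ => (n : ℝ) ^ α * Φ n) atTop (𝓝 0)) ∧
    ∀ (φ ψ : X → ℝ) (Kφ Kψ : ℝ≥0) (Cφ Cψ : ℝ),
      LipschitzWith Kφ φ → LipschitzWith Kψ ψ →
      (∀ x, |φ x| ≤ Cφ) → (∀ x, |ψ x| ≤ Cψ) → ∀ n : ℕ,
      |(∫ x, φ (T^[n] x) * ψ x ∂μ) - (∫ x, φ x ∂μ) * ∫ x, ψ x ∂μ|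
        ≤ (Cφ + Kφ) * (Cψ + Kψ) * Φ n


section AuxLogLaw
set_option maxHeartbeats 1000000

open Filter MeasureTheory Set Topology ENNReal NNReal

noncomputable def clampFn {X : Type*} (f : X → ℝ) (r : ℝ) (x : X) : ℝ :=
  max 0 (min 1 (2 - (2/r) * f x))

lemma clampFn_nonneg {X : Type*} {f : X → ℝ} {r : ℝ} (x : X) : 0 ≤ clampFn f r x :=
  le_max_left _ _

lemma clampFn_le_one {X : Type*} {f : X → ℝ} {r : ℝ} (x : X) : clampFn f r x ≤ 1 :=
  max_le zero_le_one (min_le_left _ _)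

lemma clampFn_eq_zero {X : Type*} {f : X → ℝ} {r : ℝ} (hr : 0 < r) (x : X)
    (hx : r < f x) : clampFn f r x = 0 := by
  have h2 : 2 - (2/r) * f x < 0 := by
    have : 2 < (2/r) * f x := by
      rw [div_mul_eq_mul_div, lt_div_iff₀ hr]
      nlinarith
    linarith
  have : min 1 (2 - (2/r) * f x) = 2 - (2/r) * f x := min_eq_right (by linarith)
  rw [clampFn, this, max_eq_left h2.le]

lemma one_le_clampFn {X : Type*} {f : X → ℝ} {r : ℝ} (hr : 0 < r) (x : X)
    (hx : f x ≤ r/2) : clampFn f r x = 1 := by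
  have : (1:ℝ) ≤ 2 - (2/r) * f x := by
    have : (2/r) * f x ≤ 1 := by
      rw [div_mul_eq_mul_div, div_le_one hr]; nlinarith
    linarith
  rw [clampFn, min_eq_left this, max_eq_right zero_le_one]

lemma clampFn_lipschitz {X : Type*} [MetricSpace X] {f : X → ℝ} {ℓ : ℝ≥0} {r : ℝ}
    (hf : LipschitzWith ℓ f) (hr : 0 < r) :
    LipschitzWith (Real.toNNReal (2/r) * ℓ) (clampFn f r) := by
  apply LipschitzWith.of_dist_le_mul
  intro x y
  rw [Real.dist_eq]
  have h1 : ∀ a b : ℝ, |max 0 a - max 0 b| ≤ |a - b| := by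
    intro a b
    simpa [max_comm] using abs_max_sub_max_le_abs a b 0
  have h2 : ∀ a b : ℝ, |min 1 a - min 1 b| ≤ |a - b| := by
    intro a b
    simpa using abs_min_sub_min_le_max 1 a 1 b
  have h3 : (2 - (2/r) * f x) - (2 - (2/r) * f y) = (2/r) * (f y - f x) := by ring
  calc |clampFn f r x - clampFn f r y|
      ≤ |min 1 (2 - (2/r) * f x) - min 1 (2 - (2/r) * f y)| := h1 _ _
    _ ≤ |(2 - (2/r) * f x) - (2 - (2/r) * f y)| := h2 _ _
    _ = (2/r) * |f x - f y| := by
        rw [h3, abs_mul, abs_of_nonneg (by positivity : (0:ℝ) ≤ 2/r), abs_sub_comm]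
    _ ≤ (2/r) * (ℓ * dist x y) := by
        have := hf.dist_le_mul x y
        rw [Real.dist_eq] at this
        exact mul_le_mul_of_nonneg_left this (by positivity)
    _ = ↑(Real.toNNReal (2/r) * ℓ) * dist x y := by
        rw [NNReal.coe_mul, Real.coe_toNNReal _ (by positivity)]; ring

lemma integral_comp_iterate {X : Type*} [MeasurableSpace X]
    (μ : Measure X) (T : X → X)
    (hT : MeasurePreserving T μ μ) (k : ℕ) (g : X → ℝ)
    (hg : AEStronglyMeasurable g μ) : ∫ x, g (T^[k] x) ∂μ = ∫ x, g x ∂μ := by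
  have h2 : MeasurePreserving (T^[k]) μ μ := hT.iterate k
  conv_rhs => rw [← h2.map_eq]
  rw [integral_map h2.measurable.aemeasurable (by rwa [h2.map_eq])]

lemma nohit_measure_bound {X : Type*} [MetricSpace X] [MeasurableSpace X] [BorelSpace X]
    (μ : Measure X) [IsProbabilityMeasure μ] (T : X → X)
    (hT : MeasurePreserving T μ μ)
    (S : Set X) (ψ : X → ℝ) (K : ℝ≥0) (hψL : LipschitzWith K ψ)
    (hψ0 : ∀ x, 0 ≤ ψ x) (hψ1 : ∀ x, ψ x ≤ 1)
    (hψS : ∀ x, x ∉ S → ψ x = 0)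
    (Φ : ℕ → ℝ)
    (hcorr : ∀ k : ℕ, |(∫ x, ψ (T^[k] x) * ψ x ∂μ) - (∫ x, ψ x ∂μ) * ∫ x, ψ x ∂μ|
      ≤ (1 + (K:ℝ)) * (1 + (K:ℝ)) * Φ k)
    (ha : 0 < ∫ x, ψ x ∂μ)
    (n g : ℕ) (hn : 0 < n) (hg : 0 < g)
    (D : ℝ) (hD0 : 0 ≤ D) (hD : ∀ k : ℕ, g ≤ k → (1 + (K:ℝ)) * (1 + (K:ℝ)) * Φ k ≤ D) :
    (μ {x | ∀ j : ℕ, 1 ≤ j → j ≤ n → T^[j] x ∉ S}).toReal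
      ≤ 3 * g / (n * ∫ x, ψ x ∂μ) + D / (∫ x, ψ x ∂μ)^2 := by
  set a := ∫ x, ψ x ∂μ with ha_def
  have hψc : Continuous ψ := hψL.continuous
  have hψm : Measurable ψ := hψc.measurable
  set ψi : ℕ → X → ℝ := fun i x => ψ (T^[i] x) with hψi_def
  have hmeas : ∀ i, Measurable (ψi i) := fun i => hψm.comp (hT.measurable.iterate i)
  have hint : ∀ i, Integrable (ψi i) μ := by
    intro i
    refine Integrable.mono' (integrable_const 1) (hmeas i).aestronglyMeasurable ?_
    exact Eventually.of_forall fun x => by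
      rw [Real.norm_eq_abs, abs_of_nonneg (hψ0 _)]; exact hψ1 _
  have hinta : ∀ i, ∫ x, ψi i x ∂μ = a :=
    fun i => integral_comp_iterate μ T hT i ψ hψm.aestronglyMeasurable
  have hintprod : ∀ i j : ℕ, Integrable (fun x => ψi i x * ψi j x) μ := by
    intro i j
    refine Integrable.mono' (integrable_const 1) ((hmeas i).mul (hmeas j)).aestronglyMeasurable ?_
    refine Eventually.of_forall fun x => ?_
    rw [Real.norm_eq_abs, abs_of_nonneg (mul_nonneg (hψ0 _) (hψ0 _))]
    exact mul_le_one₀ (hψ1 _) (hψ0 _) (hψ1 _)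
  set J : ℕ → ℝ := fun k => ∫ x, ψ (T^[k] x) * ψ x ∂μ with hJ_def
  have hIJ : ∀ i j : ℕ, i ≤ j → ∫ x, ψi i x * ψi j x ∂μ = J (j - i) := by
    intro i j hij
    have hcomp : ∀ x, ψi i x * ψi j x = (fun y => ψ (T^[j-i] y) * ψ y) (T^[i] x) := by
      intro x
      have : T^[j] x = T^[j-i] (T^[i] x) := by
        rw [← Function.iterate_add_apply, Nat.sub_add_cancel hij]
      simp only [ψi, this]
      ring
    simp only [hcomp]
    exact integral_comp_iterate μ T hT i _
      (((hψm.comp (hT.measurable.iterate (j-i))).mul hψm).aestronglyMeasurable)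
  have hIJ' : ∀ i j : ℕ, ∫ x, ψi i x * ψi j x ∂μ = J (Nat.dist i j) := by
    intro i j
    rcases le_total i j with h | h
    · rw [hIJ i j h, Nat.dist_eq_sub_of_le h]
    · rw [show (fun x => ψi i x * ψi j x) = fun x => ψi j x * ψi i x from
        funext fun x => mul_comm _ _, hIJ j i h, Nat.dist_comm, Nat.dist_eq_sub_of_le h]
  have hintψ : Integrable ψ μ := by simpa [ψi] using hint 0
  have ha1 : a ≤ 1 := by
    have := integral_mono hintψ (integrable_const (1:ℝ)) hψ1
    simpa using this
  have hJbound : ∀ k, |J k - a*a| ≤ min a ((1 + (K:ℝ)) * (1 + (K:ℝ)) * Φ k) := by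
    intro k
    refine le_min ?_ (hcorr k)
    have hJ0 : 0 ≤ J k := integral_nonneg fun x => mul_nonneg (hψ0 _) (hψ0 _)
    have hJa : J k ≤ a := by
      have h1 : ∀ x, ψ (T^[k] x) * ψ x ≤ ψi k x :=
        fun x => mul_le_of_le_one_right (hψ0 _) (hψ1 _)
      calc J k ≤ ∫ x, ψi k x ∂μ :=
            integral_mono (by simpa [ψi] using hintprod k 0) (hint k) h1
        _ = a := hinta k
    rw [abs_le]
    constructor <;> nlinarith
  set Y : X → ℝ := fun x => ∑ i ∈ Finset.Icc 1 n, ψi i x with hY_def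
  have hcard : (Finset.Icc 1 n).card = n := by rw [Nat.card_Icc]; omega
  have hYsub : ∀ x, Y x - n * a = ∑ i ∈ Finset.Icc 1 n, (ψi i x - a) := by
    intro x
    rw [Finset.sum_sub_distrib, Finset.sum_const, hcard, nsmul_eq_mul]
  have hintsub : ∀ i j : ℕ, Integrable (fun x => (ψi i x - a) * (ψi j x - a)) μ := by
    intro i j
    refine Integrable.mono' (integrable_const ((1+|a|)*(1+|a|)))
      (((hmeas i).sub measurable_const).mul
        ((hmeas j).sub measurable_const)).aestronglyMeasurable ?_
    refine Eventually.of_forall fun x => ?_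
    rw [Real.norm_eq_abs, abs_mul]
    have h1 : ∀ i, |ψi i x - a| ≤ 1 + |a| := by
      intro i
      refine (abs_sub _ _).trans ?_
      have : |ψi i x| ≤ 1 := abs_le.2 ⟨by linarith [hψ0 (T^[i] x)], hψ1 _⟩
      linarith
    exact mul_le_mul (h1 i) (h1 j) (abs_nonneg _) (by positivity)
  have hterm : ∀ i j : ℕ, ∫ x, (ψi i x - a) * (ψi j x - a) ∂μ = J (Nat.dist i j) - a * a := by
    intro i j
    have hexp : (fun x => (ψi i x - a) * (ψi j x - a))
        = fun x => (ψi i x * ψi j x - a * ψi i x) - (a * ψi j x - a * a) :=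
      funext fun x => by ring
    have hi1 : Integrable (fun x => ψi i x * ψi j x - a * ψi i x) μ :=
      (hintprod i j).sub ((hint i).const_mul a)
    have hi2 : Integrable (fun x => a * ψi j x - a * a) μ :=
      ((hint j).const_mul a).sub (integrable_const _)
    rw [hexp, integral_sub hi1 hi2,
      integral_sub (hintprod i j) ((hint i).const_mul a),
      integral_sub ((hint j).const_mul a) (integrable_const _),
      integral_const_mul, integral_const_mul, hinta, hinta, hIJ', integral_const]
    simp
  have hintsq : Integrable (fun x => (Y x - n * a)^2) μ := by
    refine Integrable.mono' (integrable_const ((n * (1+|a|))^2))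
      (((Finset.measurable_sum _ (fun i _ => hmeas i)).sub measurable_const).pow_const
        2).aestronglyMeasurable ?_
    refine Eventually.of_forall fun x => ?_
    rw [Real.norm_eq_abs, abs_pow, sq_abs]
    have hb : |Y x - n * a| ≤ n * (1 + |a|) := by
      rw [hYsub]
      refine (Finset.abs_sum_le_sum_abs _ _).trans ?_
      have : ∀ i ∈ Finset.Icc 1 n, |ψi i x - a| ≤ 1 + |a| := by
        intro i _
        refine (abs_sub _ _).trans ?_
        have : |ψi i x| ≤ 1 := abs_le.2 ⟨by linarith [hψ0 (T^[i] x)], hψ1 _⟩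
        linarith
      refine (Finset.sum_le_sum this).trans ?_
      rw [Finset.sum_const, hcard, nsmul_eq_mul]
    calc (Y x - n*a)^2 = |Y x - n*a|^2 := (sq_abs _).symm
      _ ≤ (n * (1+|a|))^2 := by
          have h0 : (0:ℝ) ≤ |Y x - n*a| := abs_nonneg _
          nlinarith
  have hVar : ∫ x, (Y x - n * a)^2 ∂μ
      = ∑ i ∈ Finset.Icc 1 n, ∑ j ∈ Finset.Icc 1 n, (J (Nat.dist i j) - a * a) := by
    have hsq : (fun x => (Y x - n * a)^2)
        = fun x => ∑ i ∈ Finset.Icc 1 n, ∑ j ∈ Finset.Icc 1 n, (ψi i x - a) * (ψi j x - a) := by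
      funext x
      rw [sq, hYsub, Finset.sum_mul_sum]
    rw [hsq, integral_finset_sum _ (fun i _ => integrable_finset_sum _ (fun j _ => hintsub i j))]
    refine Finset.sum_congr rfl fun i _ => ?_
    rw [integral_finset_sum _ (fun j _ => hintsub i j)]
    exact Finset.sum_congr rfl fun j _ => hterm i j
  -- Chebyshev
  have hna : (0:ℝ) < (n:ℝ) * a := mul_pos (Nat.cast_pos.2 hn) ha
  have cheb := mul_meas_ge_le_integral_of_nonneg
    (Eventually.of_forall fun x => sq_nonneg (Y x - n * a)) hintsq (((n:ℝ) * a)^2)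
  have hsubE : {x | ∀ j : ℕ, 1 ≤ j → j ≤ n → T^[j] x ∉ S}
      ⊆ {x | ((n:ℝ)*a)^2 ≤ (Y x - n*a)^2} := by
    intro x hx
    have hY0 : Y x = 0 := Finset.sum_eq_zero fun i hi => by
      rw [Finset.mem_Icc] at hi
      exact hψS _ (hx i hi.1 hi.2)
    simp only [Set.mem_setOf_eq, hY0, zero_sub, neg_sq]
    exact le_refl _
  have step1 : (μ {x | ∀ j : ℕ, 1 ≤ j → j ≤ n → T^[j] x ∉ S}).toReal
      ≤ (∫ x, (Y x - n*a)^2 ∂μ) / ((n:ℝ)*a)^2 := by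
    rw [le_div_iff₀ (by positivity)]
    calc (μ {x | ∀ j : ℕ, 1 ≤ j → j ≤ n → T^[j] x ∉ S}).toReal * ((n:ℝ)*a)^2
        ≤ (μ {x | ((n:ℝ)*a)^2 ≤ (Y x - n*a)^2}).toReal * ((n:ℝ)*a)^2 := by
          refine mul_le_mul_of_nonneg_right ?_ (by positivity)
          exact ENNReal.toReal_mono (measure_ne_top μ _) (measure_mono hsubE)
      _ ≤ ∫ x, (Y x - n*a)^2 ∂μ := by rw [mul_comm]; exact cheb
  -- bound the variance
  have hVbound : ∫ x, (Y x - n * a)^2 ∂μ ≤ (n:ℝ) * (3 * g * a + n * D) := by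
    rw [hVar]
    have hentry : ∀ i j : ℕ, J (Nat.dist i j) - a * a
        ≤ if Nat.dist i j < g then a else D := by
      intro i j
      have h1 := (le_abs_self _).trans (hJbound (Nat.dist i j))
      split_ifs with h
      · exact h1.trans (min_le_left _ _)
      · exact h1.trans ((min_le_right _ _).trans (hD _ (not_lt.1 h)))
    have hinner : ∀ i : ℕ, ∑ j ∈ Finset.Icc 1 n, (if Nat.dist i j < g then a else D)
        ≤ (2*g+1) * a + n * D := by
      intro i
      have hsplit : ∀ j : ℕ, (if Nat.dist i j < g then a else D)
          ≤ (if Nat.dist i j < g then a else 0) + D := by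
        intro j
        split_ifs
        · linarith
        · linarith
      calc ∑ j ∈ Finset.Icc 1 n, (if Nat.dist i j < g then a else D)
          ≤ ∑ j ∈ Finset.Icc 1 n, ((if Nat.dist i j < g then a else 0) + D) :=
            Finset.sum_le_sum fun j _ => hsplit j
        _ = (∑ j ∈ Finset.Icc 1 n, if Nat.dist i j < g then a else 0) + n * D := by
            rw [Finset.sum_add_distrib, Finset.sum_const, hcard, nsmul_eq_mul]
        _ ≤ (2*g+1) * a + n * D := by
            have heq : (∑ j ∈ Finset.Icc 1 n, if Nat.dist i j < g then a else 0)
                = ((Finset.Icc 1 n).filter (fun j => Nat.dist i j < g)).card • a := by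
              rw [← Finset.sum_filter, Finset.sum_const]
            have hsubf : (Finset.Icc 1 n).filter (fun j => Nat.dist i j < g)
                ⊆ Finset.Icc (i - g) (i + g) := by
              intro j hj
              rw [Finset.mem_filter] at hj
              have := hj.2
              simp only [Nat.dist] at this
              rw [Finset.mem_Icc]
              omega
            have hcardf : ((Finset.Icc 1 n).filter (fun j => Nat.dist i j < g)).card
                ≤ 2*g+1 := by
              refine (Finset.card_le_card hsubf).trans ?_
              rw [Nat.card_Icc]
              omega
            have : (((Finset.Icc 1 n).filter (fun j => Nat.dist i j < g)).card : ℝ)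
                ≤ ((2*g+1 : ℕ) : ℝ) := Nat.cast_le.2 hcardf
            rw [heq, nsmul_eq_mul]
            push_cast at this ⊢
            nlinarith
    calc ∑ i ∈ Finset.Icc 1 n, ∑ j ∈ Finset.Icc 1 n, (J (Nat.dist i j) - a * a)
        ≤ ∑ i ∈ Finset.Icc 1 n, ((2*g+1) * a + n * D) := by
          refine Finset.sum_le_sum fun i _ => ?_
          exact (Finset.sum_le_sum fun j _ => hentry i j).trans (hinner i)
      _ = (n:ℝ) * ((2*g+1) * a + n * D) := by
          rw [Finset.sum_const, hcard, nsmul_eq_mul]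
      _ ≤ (n:ℝ) * (3 * g * a + n * D) := by
          have hg1 : (1:ℝ) ≤ (g:ℝ) := by exact_mod_cast hg
          have hn0 : (0:ℝ) ≤ (n:ℝ) := Nat.cast_nonneg n
          nlinarith
  have halg : ((n:ℝ) * (3 * g * a + n * D)) / ((n:ℝ)*a)^2 = 3*g/(n*a) + D/a^2 := by
    have hn0 : (n:ℝ) ≠ 0 := Nat.cast_ne_zero.2 hn.ne'
    field_simp
  calc (μ {x | ∀ j : ℕ, 1 ≤ j → j ≤ n → T^[j] x ∉ S}).toReal
      ≤ (∫ x, (Y x - n*a)^2 ∂μ) / ((n:ℝ)*a)^2 := step1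
    _ ≤ ((n:ℝ) * (3 * g * a + n * D)) / ((n:ℝ)*a)^2 := by
        exact div_le_div_of_nonneg_right hVbound (by positivity) |>.trans_eq rfl
    _ = 3*g/(n*a) + D/a^2 := halg

lemma d_nonneg {X : Type*} [MetricSpace X] [MeasurableSpace X] [BorelSpace X]
    (μ : Measure X) [IsProbabilityMeasure μ] (f : X → ℝ) (d : ℝ)
    (hd : Tendsto (fun r : ℝ => ENNReal.log (μ {y | f y ≤ r}) / ((Real.log r : ℝ) : EReal))
      (𝓝[>] 0) (𝓝 (d : EReal))) : 0 ≤ d := by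
  have hev : ∀ᶠ r in 𝓝[>] (0:ℝ),
      (0 : EReal) ≤ ENNReal.log (μ {y | f y ≤ r}) / ((Real.log r : ℝ) : EReal) := by
    filter_upwards [Ioo_mem_nhdsGT_of_mem (⟨le_refl (0:ℝ), one_pos⟩ : (0:ℝ) ∈ Ico (0:ℝ) 1)]
      with r hr
    refine EReal.div_nonneg_of_nonpos_of_nonpos ?_ ?_
    · calc ENNReal.log (μ {y | f y ≤ r}) ≤ ENNReal.log 1 :=
        ENNReal.log_le_log_iff.2 prob_le_one
      _ = 0 := by simp [ENNReal.log_one]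
    · exact_mod_cast (Real.log_neg hr.1 hr.2).le
  have := ge_of_tendsto hd hev
  exact_mod_cast this

lemma measure_sublevel_lower {X : Type*} [MetricSpace X] [MeasurableSpace X] [BorelSpace X]
    (μ : Measure X) [IsProbabilityMeasure μ] (f : X → ℝ) (d : ℝ)
    (hd : Tendsto (fun r : ℝ => ENNReal.log (μ {y | f y ≤ r}) / ((Real.log r : ℝ) : EReal))
      (𝓝[>] 0) (𝓝 (d : EReal)))
    (p : ℝ) (hp : d < p) :
    ∀ᶠ r in 𝓝[>] (0:ℝ), ENNReal.ofReal (r ^ p) ≤ μ {y | f y ≤ r} := by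
  have h1 : ∀ᶠ r in 𝓝[>] (0:ℝ),
      ENNReal.log (μ {y | f y ≤ r}) / ((Real.log r : ℝ) : EReal) < (p : EReal) :=
    hd.eventually_lt_const (by exact_mod_cast hp)
  filter_upwards [h1,
    Ioo_mem_nhdsGT_of_mem (⟨le_refl (0:ℝ), one_pos⟩ : (0:ℝ) ∈ Ico (0:ℝ) 1)] with r hr hr01
  by_contra hcon
  push_neg at hcon
  have hlogr : Real.log r < 0 := Real.log_neg hr01.1 hr01.2
  have hlt : ENNReal.log (μ {y | f y ≤ r}) < ((p * Real.log r : ℝ) : EReal) := by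
    have := ENNReal.log_lt_log_iff.2 hcon
    rwa [ENNReal.log_ofReal, if_neg (not_le.2 (Real.rpow_pos_of_pos hr01.1 p)),
      Real.log_rpow hr01.1] at this
  have hdiv : ((p * Real.log r : ℝ) : EReal) / ((Real.log r : ℝ) : EReal)
      ≤ ENNReal.log (μ {y | f y ≤ r}) / ((Real.log r : ℝ) : EReal) :=
    EReal.div_le_div_right_of_nonpos (by exact_mod_cast hlogr.le) hlt.le
  rw [← EReal.coe_div, mul_div_assoc, div_self hlogr.ne, mul_one] at hdiv
  exact absurd (hdiv.trans_lt hr) (lt_irrefl _)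

lemma hitTime_antitone {X : Type*} (T : X → X) {S S' : Set X} (h : S ⊆ S') (x : X) :
    hitTime T S' x ≤ hitTime T S x :=
  sInf_le_sInf (Set.image_mono fun n hn => ⟨hn.1, h hn.2⟩)

lemma hitTime_le {X : Type*} (T : X → X) {S : Set X} {x : X} {j : ℕ} (hj : 0 < j)
    (hx : T^[j] x ∈ S) : hitTime T S x ≤ (j : ℕ∞) :=
  sInf_le ⟨j, ⟨hj, hx⟩, rfl⟩

lemma limsup_le_of_eventual_hit {X : Type*} [MetricSpace X] (T : X → X) (f : X → ℝ)
    (x : X) (d ε : ℝ) (hd0 : 0 ≤ d) (hε : 0 < ε) (N : ℕ → ℕ)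
    (hN1 : ∀ k, 1 ≤ N k)
    (hN : ∀ k : ℕ, (N k : ℝ) ≤ 2 * (2:ℝ) ^ ((d + 3*ε) * (k:ℝ)))
    (hhit : ∀ᶠ k : ℕ in atTop,
      hitTime T {y | f y ≤ (2:ℝ) ^ (-(k:ℝ))} x ≤ (N k : ℕ∞)) :
    limsup (fun r : ℝ =>
        ENNReal.log ((hitTime T {y | f y ≤ r} x : ℝ≥0∞)) / ((- Real.log r : ℝ) : EReal))
      (𝓝[>] 0) ≤ ((d + 4*ε : ℝ) : EReal) := by
  obtain ⟨k₁, hk₁⟩ := eventually_atTop.1 hhit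
  set k₂ : ℕ := max (max k₁ 1) (⌈(1 + d + 3*ε)/ε⌉₊ + 1) with hk₂def
  refine Filter.limsup_le_of_le (by isBoundedDefault) ?_
  have h2pos : ∀ y : ℝ, (0:ℝ) < (2:ℝ) ^ y := fun y => Real.rpow_pos_of_pos two_pos y
  filter_upwards [Ioo_mem_nhdsGT_of_mem
    (⟨le_refl (0:ℝ), h2pos _⟩ : (0:ℝ) ∈ Ico (0:ℝ) ((2:ℝ) ^ (-((k₂:ℝ)+1))))] with r hr
  obtain ⟨hr0, hrδ⟩ := hr
  set k : ℕ := ⌊Real.logb 2 r⁻¹⌋₊ with hkdef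
  have hrinv : (2:ℝ) ^ ((k₂:ℝ)+1) < r⁻¹ := by
    rw [Real.rpow_neg (by norm_num)] at hrδ
    exact (lt_inv_comm₀ hr0 (h2pos _)).1 hrδ
  have hklarge : k₂ + 1 ≤ k := by
    apply Nat.le_floor
    rw [Real.le_logb_iff_rpow_le (by norm_num) (by positivity)]
    push_cast
    exact hrinv.le
  have hkpos : 0 < k := by omega
  have hrinv1 : (1:ℝ) ≤ r⁻¹ := by
    refine le_trans ?_ hrinv.le
    rw [show (1:ℝ) = (2:ℝ) ^ (0:ℝ) by simp]
    exact Real.rpow_le_rpow_of_exponent_le (by norm_num) (by positivity)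
  have h2k : (2:ℝ) ^ (k:ℝ) ≤ r⁻¹ := by
    have h1 : (k:ℝ) ≤ Real.logb 2 r⁻¹ :=
      Nat.floor_le (Real.logb_nonneg (by norm_num) hrinv1)
    rw [← Real.rpow_logb two_pos (by norm_num) (inv_pos.2 hr0)]
    exact Real.rpow_le_rpow_of_exponent_le (by norm_num) h1
  have hrk : r ≤ (2:ℝ) ^ (-(k:ℝ)) := by
    rw [Real.rpow_neg (by norm_num)]
    exact (le_inv_comm₀ (h2pos _) hr0).1 h2k
  have hrk2 : (2:ℝ) ^ (-((k:ℝ)+1)) < r := by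
    have h1 : Real.logb 2 r⁻¹ < (k:ℝ) + 1 := Nat.lt_floor_add_one _
    have h2 : r⁻¹ < (2:ℝ) ^ ((k:ℝ)+1) := by
      rw [← Real.rpow_logb two_pos (by norm_num) (inv_pos.2 hr0)]
      exact Real.rpow_lt_rpow_of_exponent_lt (by norm_num) h1
    rw [Real.rpow_neg (by norm_num)]
    exact (inv_lt_comm₀ hr0 (h2pos _)).1 h2
  -- hitting time bound at scale k+1
  have hhit2 : hitTime T {y | f y ≤ r} x ≤ ((N (k+1) : ℕ) : ℕ∞) := by
    have hsub : {y : X | f y ≤ (2:ℝ) ^ (-(((k+1):ℕ):ℝ))} ⊆ {y | f y ≤ r} := by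
      intro y hy
      simp only [Set.mem_setOf_eq] at hy ⊢
      refine hy.trans (le_trans (le_of_eq ?_) hrk2.le)
      push_cast
      ring_nf
    exact le_trans (hitTime_antitone T hsub x) (hk₁ (k+1) (by omega))
  -- numerator bound
  have hNcast : ((N (k+1) : ℕ∞) : ℝ≥0∞) = ((N (k+1) : ℕ) : ℝ≥0∞) := by
    exact_mod_cast rfl
  have hnum : ENNReal.log ((hitTime T {y | f y ≤ r} x : ℝ≥0∞))
      ≤ ((Real.log (N (k+1)) : ℝ) : EReal) := by
    have h1 : ((hitTime T {y | f y ≤ r} x : ℕ∞) : ℝ≥0∞) ≤ ((N (k+1) : ℕ) : ℝ≥0∞) := by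
      rw [← hNcast]
      exact_mod_cast hhit2
    refine le_trans (ENNReal.log_le_log_iff.2 h1) ?_
    rw [← ENNReal.ofReal_natCast, ENNReal.log_ofReal,
      if_neg (not_le.2 (by exact_mod_cast hN1 (k+1)))]
  -- denominator positivity
  have hr1 : r < 1 := lt_trans hrδ (Real.rpow_lt_one_of_one_lt_of_neg (by norm_num)
    (by push_cast; linarith [Nat.cast_nonneg (α := ℝ) k₂]))
  have hden : (0:ℝ) < -Real.log r := by
    have := Real.log_neg hr0 hr1
    linarith
  -- reduce to a real inequality
  have hchain : ENNReal.log ((hitTime T {y | f y ≤ r} x : ℝ≥0∞)) / ((- Real.log r : ℝ) : EReal)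
      ≤ ((Real.log (N (k+1)) / (- Real.log r) : ℝ) : EReal) := by
    rw [EReal.coe_div]
    exact EReal.div_le_div_right_of_nonneg (by exact_mod_cast hden.le) hnum
  refine le_trans hchain ?_
  rw [EReal.coe_le_coe_iff]
  -- the real computation
  have hlog2 : (0:ℝ) < Real.log 2 := Real.log_pos (by norm_num)
  have hlogN0 : 0 ≤ Real.log (N (k+1)) :=
    Real.log_nonneg (by exact_mod_cast hN1 (k+1))
  have hlogNub : Real.log (N (k+1)) ≤ Real.log 2 + (d+3*ε)*((k:ℝ)+1) * Real.log 2 := by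
    have h1 : (N (k+1) : ℝ) ≤ 2 * (2:ℝ) ^ ((d + 3*ε) * ((k:ℝ)+1)) := by
      have := hN (k+1); push_cast at this ⊢; linarith
    calc Real.log (N (k+1)) ≤ Real.log (2 * (2:ℝ) ^ ((d + 3*ε) * ((k:ℝ)+1))) :=
          Real.log_le_log (by exact_mod_cast hN1 (k+1)) h1
      _ = Real.log 2 + (d+3*ε)*((k:ℝ)+1) * Real.log 2 := by
          rw [Real.log_mul (by norm_num) (h2pos _).ne', Real.log_rpow two_pos]
  have hdenlb : (k:ℝ) * Real.log 2 ≤ -Real.log r := by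
    have h1 : Real.log ((2:ℝ) ^ (k:ℝ)) ≤ Real.log r⁻¹ :=
      Real.log_le_log (h2pos _) h2k
    rwa [Real.log_rpow two_pos, Real.log_inv] at h1
  have hklog2 : (0:ℝ) < (k:ℝ) * Real.log 2 := by positivity
  have hkeps : 1 + d + 3*ε ≤ (k:ℝ) * ε := by
    have h1 : (1 + d + 3*ε)/ε ≤ (⌈(1 + d + 3*ε)/ε⌉₊ : ℝ) := Nat.le_ceil _
    have h2 : (⌈(1 + d + 3*ε)/ε⌉₊ : ℝ) ≤ (k:ℝ) := by
      have : ⌈(1 + d + 3*ε)/ε⌉₊ ≤ k := by omega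
      exact_mod_cast this
    have := (div_le_iff₀ hε).1 (h1.trans h2)
    linarith
  calc Real.log (N (k+1)) / (-Real.log r)
      ≤ Real.log (N (k+1)) / ((k:ℝ) * Real.log 2) :=
        div_le_div_of_nonneg_left hlogN0 hklog2 hdenlb
    _ ≤ (Real.log 2 + (d+3*ε)*((k:ℝ)+1) * Real.log 2) / ((k:ℝ) * Real.log 2) :=
        (div_le_div_iff_of_pos_right hklog2).2 hlogNub
    _ = (1 + (d+3*ε)*((k:ℝ)+1)) / (k:ℝ) := by
        rw [div_eq_div_iff hklog2.ne' (by positivity : ((k:ℝ)) ≠ 0)]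
        ring
    _ ≤ d + 4*ε := by
        rw [div_le_iff₀ (by positivity : (0:ℝ) < (k:ℝ))]
        have hk1r : (1:ℝ) ≤ (k:ℝ) := by exact_mod_cast hkpos
        nlinarith [hkeps, hε, hd0]

end AuxLogLaw

set_option maxHeartbeats 4000000
/-- Upper-bound half of the logarithm law: if the system has
superpolynomial decay of correlations with respect to Lipschitz observables, `f : X → [0,∞)`
is `ℓ`-Lipschitz with sublevel sets `S_r = {x : f x ≤ r}`, and
`d(f) = lim_{r→0} log μ(S_r)/log r` exists, then for `μ`-a.e. `x`,
`limsup_{r→0} log τ(x,S_r)/(-log r) ≤ d(f)`. -/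
theorem hitting_limsup_le_dim
    {X : Type*} [MetricSpace X] [MeasurableSpace X] [BorelSpace X]
    (μ : Measure X) [IsProbabilityMeasure μ]
    (T : X → X) (hT : MeasurePreserving T μ μ)
    (hmix : SuperpolynomialDecayOfCorrelations μ T)
    (ℓ : ℝ≥0) (f : X → ℝ) (hf : LipschitzWith ℓ f) (hf0 : ∀ x, 0 ≤ f x)
    (d : ℝ)
    (hd : Tendsto (fun r : ℝ => ENNReal.log (μ {y | f y ≤ r}) / ((Real.log r : ℝ) : EReal))
      (𝓝[>] 0) (𝓝 (d : EReal))) :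
    ∀ᵐ x ∂μ,
      limsup (fun r : ℝ =>
          ENNReal.log ((hitTime T {y | f y ≤ r} x : ℝ≥0∞)) / ((- Real.log r : ℝ) : EReal))
        (𝓝[>] 0) ≤ (d : EReal) := by
  classical
  obtain ⟨Φ, hΦ0, hΦtend, hΦcorr⟩ := hmix
  have hd0 : 0 ≤ d := d_nonneg μ f d hd
  have h2pos : ∀ y : ℝ, (0:ℝ) < (2:ℝ) ^ y := fun y => Real.rpow_pos_of_pos two_pos y
  have hone_le : ∀ y : ℝ, 0 ≤ y → (1:ℝ) ≤ (2:ℝ) ^ y := by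
    intro y hy
    rw [show (1:ℝ) = (2:ℝ) ^ (0:ℝ) by simp]
    exact Real.rpow_le_rpow_of_exponent_le (by norm_num) hy
  suffices H : ∀ m : ℕ, ∀ᵐ x ∂μ,
      limsup (fun r : ℝ =>
          ENNReal.log ((hitTime T {y | f y ≤ r} x : ℝ≥0∞)) / ((- Real.log r : ℝ) : EReal))
        (𝓝[>] 0) ≤ ((d + 4*(1/((m:ℝ)+1)) : ℝ) : EReal) by
    have H2 := (MeasureTheory.ae_all_iff).2 H
    filter_upwards [H2] with x hx
    by_contra hcon
    push_neg at hcon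
    obtain ⟨z, hz1, hz2⟩ := EReal.exists_between_coe_real hcon
    have hzd : d < z := by exact_mod_cast hz1
    obtain ⟨m, hm⟩ := exists_nat_one_div_lt (show (0:ℝ) < (z - d)/4 by linarith)
    have hlt : ((d + 4*(1/((m:ℝ)+1)) : ℝ) : EReal) < (z : EReal) := by
      rw [EReal.coe_lt_coe_iff]
      linarith
    exact absurd (((hx m).trans_lt hlt).trans hz2) (lt_irrefl _)
  intro m
  have hε : (0:ℝ) < 1/((m:ℝ)+1) := by positivity
  set ε : ℝ := 1/((m:ℝ)+1) with hεdef
  set p : ℝ := d + ε with hpdef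
  have hp0 : 0 < p := by rw [hpdef]; linarith
  set β : ℝ := (3 + 2*p)/ε with hβdef
  have hβ0 : 0 < β := by rw [hβdef]; positivity
  have hεβ : ε * β = 3 + 2*p := by
    rw [hβdef]
    field_simp
  -- polynomial bound on Φ
  obtain ⟨N₀, hN₀⟩ := eventually_atTop.1 ((hΦtend β hβ0).eventually_lt_const one_pos)
  set M : ℝ := 1 + ∑ j ∈ Finset.range N₀, ((j:ℝ)^β * Φ j) with hMdef
  have hsum_nonneg : (0:ℝ) ≤ ∑ j ∈ Finset.range N₀, ((j:ℝ)^β * Φ j) :=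
    Finset.sum_nonneg fun j _ => mul_nonneg (Real.rpow_nonneg (Nat.cast_nonneg j) β) (hΦ0 j)
  have hM1 : (1:ℝ) ≤ M := by rw [hMdef]; linarith
  have hM0 : (0:ℝ) < M := lt_of_lt_of_le one_pos hM1
  have hM : ∀ j : ℕ, 1 ≤ j → Φ j ≤ M * (j:ℝ)^(-β) := by
    intro j hj
    have hjpos : (0:ℝ) < (j:ℝ) := by exact_mod_cast hj
    have hjb : (0:ℝ) < (j:ℝ)^β := Real.rpow_pos_of_pos hjpos β
    have key : (j:ℝ)^β * Φ j ≤ M := by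
      rcases le_or_gt N₀ j with h | h
      · exact (hN₀ j h).le.trans hM1
      · have h1 : (j:ℝ)^β * Φ j ≤ ∑ i ∈ Finset.range N₀, ((i:ℝ)^β * Φ i) :=
          Finset.single_le_sum
            (fun i _ => mul_nonneg (Real.rpow_nonneg (Nat.cast_nonneg i) β) (hΦ0 i))
            (Finset.mem_range.2 h)
        rw [hMdef]; linarith
    rw [Real.rpow_neg (Nat.cast_nonneg j), ← div_eq_mul_inv, le_div_iff₀ hjb]
    linarith [key, mul_comm ((j:ℝ)^β) (Φ j)]
  -- measure lower bound radius
  obtain ⟨r₀, hr₀mem, hr₀⟩ := mem_nhdsGT_iff_exists_Ioo_subset.1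
    (measure_sublevel_lower μ f d hd p (by rw [hpdef]; linarith))
  have hr₀pos : (0:ℝ) < r₀ := hr₀mem
  -- threshold
  have htend0 : Tendsto (fun k : ℕ => (2:ℝ)^(-(k:ℝ))) atTop (𝓝 0) := by
    have heq : ∀ k : ℕ, (2:ℝ)^(-(k:ℝ)) = ((2:ℝ)⁻¹)^k := by
      intro k
      rw [Real.rpow_neg (by norm_num), Real.rpow_natCast, inv_pow]
    simp only [heq]
    exact tendsto_pow_atTop_nhds_zero_of_lt_one (by norm_num) (by norm_num)
  obtain ⟨k₀, hk₀⟩ := eventually_atTop.1 (htend0.eventually_lt_const hr₀pos)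
  -- scales
  set nn : ℕ → ℕ := fun k => ⌈(2:ℝ)^((d+3*ε)*(k:ℝ))⌉₊ with hnndef
  set gg : ℕ → ℕ := fun k => ⌈(2:ℝ)^(ε*(k:ℝ))⌉₊ with hggdef
  have hnn1 : ∀ k, 1 ≤ nn k := fun k => Nat.one_le_ceil_iff.2 (h2pos _)
  have hgg1 : ∀ k, 1 ≤ gg k := fun k => Nat.one_le_ceil_iff.2 (h2pos _)
  have hnnk : ∀ k : ℕ, (2:ℝ)^((d+3*ε)*(k:ℝ)) ≤ (nn k : ℝ) := fun k => Nat.le_ceil _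
  have hggk : ∀ k : ℕ, (2:ℝ)^(ε*(k:ℝ)) ≤ (gg k : ℝ) := fun k => Nat.le_ceil _
  have hnnub : ∀ k : ℕ, (nn k : ℝ) ≤ 2 * (2:ℝ)^((d+3*ε)*(k:ℝ)) := by
    intro k
    have h1 := Nat.ceil_lt_add_one (Real.rpow_nonneg (by norm_num : (0:ℝ) ≤ 2) ((d+3*ε)*(k:ℝ)))
    have h2 := hone_le ((d+3*ε)*(k:ℝ)) (by positivity)
    simp only [hnndef]
    linarith
  have hggub : ∀ k : ℕ, (gg k : ℝ) ≤ 2 * (2:ℝ)^(ε*(k:ℝ)) := by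
    intro k
    have h1 := Nat.ceil_lt_add_one (Real.rpow_nonneg (by norm_num : (0:ℝ) ≤ 2) (ε*(k:ℝ)))
    have h2 := hone_le (ε*(k:ℝ)) (by positivity)
    simp only [hggdef]
    linarith
  set E : ℕ → Set X := fun k =>
    {x | ∀ j : ℕ, 1 ≤ j → j ≤ nn k → T^[j] x ∉ {y | f y ≤ (2:ℝ)^(-(k:ℝ))}} with hEdef
  set c1 : ℝ := 6 * (2:ℝ)^p with hc1def
  set c2 : ℝ := 4 * (1+(ℓ:ℝ))^2 * M * (2:ℝ)^(2*p) with hc2def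
  -- the per-scale bound
  have hEbound : ∀ k : ℕ, k₀ ≤ k →
      (μ (E k)).toReal ≤ c1 * ((2:ℝ)^(-ε))^k + c2 * ((2:ℝ)⁻¹)^k := by
    intro k hk
    have hrpos : (0:ℝ) < (2:ℝ)^(-(k:ℝ)) := h2pos _
    have hfc : Continuous f := hf.continuous
    have hSmeas : MeasurableSet {y : X | f y ≤ (2:ℝ)^(-(k:ℝ))/2} :=
      (isClosed_le hfc continuous_const).measurableSet
    set ψ : X → ℝ := clampFn f ((2:ℝ)^(-(k:ℝ))) with hψdef
    set K : ℝ≥0 := Real.toNNReal (2/((2:ℝ)^(-(k:ℝ)))) * ℓ with hKdef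
    have hψL : LipschitzWith K ψ := clampFn_lipschitz hf hrpos
    have hψ0 : ∀ y, 0 ≤ ψ y := fun y => clampFn_nonneg y
    have hψ1 : ∀ y, ψ y ≤ 1 := fun y => clampFn_le_one y
    have hψS : ∀ y, y ∉ {y : X | f y ≤ (2:ℝ)^(-(k:ℝ))} → ψ y = 0 :=
      fun y hy => clampFn_eq_zero hrpos y (not_le.1 hy)
    have hψb : ∀ y, |ψ y| ≤ 1 := fun y => abs_le.2 ⟨by linarith [hψ0 y], hψ1 y⟩
    have hcorr := fun kk : ℕ => hΦcorr ψ ψ K K 1 1 hψL hψL hψb hψb kk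
    -- lower bound on the mean
    have hrlt : (2:ℝ)^(-(k:ℝ)) < r₀ := hk₀ k hk
    have hr2 : (2:ℝ)^(-(k:ℝ))/2 = (2:ℝ)^(-(k:ℝ)-1) := by
      rw [Real.rpow_sub two_pos, Real.rpow_one]
    have hμhalf : ENNReal.ofReal (((2:ℝ)^(-(k:ℝ))/2)^p) ≤ μ {y : X | f y ≤ (2:ℝ)^(-(k:ℝ))/2} :=
      hr₀ ⟨by positivity, by linarith⟩
    have hint_ind : Integrable ({y : X | f y ≤ (2:ℝ)^(-(k:ℝ))/2}.indicator
        (fun _ => (1:ℝ))) μ := (integrable_const 1).indicator hSmeas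
    have hintψ : Integrable ψ μ := by
      refine Integrable.mono' (integrable_const 1)
        hψL.continuous.measurable.aestronglyMeasurable ?_
      exact Eventually.of_forall fun y => by rw [Real.norm_eq_abs]; exact hψb y
    have hind_le : ∀ y, ({y : X | f y ≤ (2:ℝ)^(-(k:ℝ))/2}.indicator (fun _ => (1:ℝ))) y
        ≤ ψ y := by
      intro y
      rw [Set.indicator_apply]
      split_ifs with h
      · exact le_of_eq (one_le_clampFn hrpos y h).symm
      · exact hψ0 y
    have halow : (2:ℝ)^((-(k:ℝ)-1)*p) ≤ ∫ y, ψ y ∂μ := by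
      have h1 : ((2:ℝ)^(-(k:ℝ))/2)^p ≤ (μ {y : X | f y ≤ (2:ℝ)^(-(k:ℝ))/2}).toReal :=
        (ENNReal.ofReal_le_iff_le_toReal (measure_ne_top μ _)).1 hμhalf
      have h2 : (μ {y : X | f y ≤ (2:ℝ)^(-(k:ℝ))/2}).toReal ≤ ∫ y, ψ y ∂μ := by
        rw [← measureReal_def, ← integral_indicator_one hSmeas]
        exact integral_mono hint_ind hintψ hind_le
      refine le_trans (le_of_eq ?_) (h1.trans h2)
      rw [hr2]
      exact Real.rpow_mul (by norm_num : (0:ℝ) ≤ 2) _ _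
    have hapos : (0:ℝ) < ∫ y, ψ y ∂μ := lt_of_lt_of_le (h2pos _) halow
    -- decay tail bound
    have hggpos : (0:ℝ) < (gg k : ℝ) := by exact_mod_cast hgg1 k
    set D : ℝ := (1+(K:ℝ))*(1+(K:ℝ))*(M*((gg k:ℝ))^(-β)) with hDdef
    have hK0 : (0:ℝ) ≤ (K:ℝ) := K.coe_nonneg
    have hD0 : (0:ℝ) ≤ D := by
      rw [hDdef]
      have := Real.rpow_nonneg hggpos.le (-β)
      positivity
    have hD : ∀ j : ℕ, gg k ≤ j → (1+(K:ℝ))*(1+(K:ℝ))*Φ j ≤ D := by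
      intro j hj
      have hj1 : 1 ≤ j := le_trans (hgg1 k) hj
      have h1 : Φ j ≤ M * (j:ℝ)^(-β) := hM j hj1
      have h2 : (j:ℝ)^(-β) ≤ ((gg k:ℝ))^(-β) := by
        rw [Real.rpow_neg (Nat.cast_nonneg j), Real.rpow_neg hggpos.le]
        have hb : ((gg k:ℝ))^β ≤ (j:ℝ)^β :=
          Real.rpow_le_rpow hggpos.le (by exact_mod_cast hj) hβ0.le
        exact inv_anti₀ (Real.rpow_pos_of_pos hggpos β) hb
      rw [hDdef]
      refine mul_le_mul_of_nonneg_left ?_ (by positivity)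
      calc Φ j ≤ M * (j:ℝ)^(-β) := h1
        _ ≤ M * ((gg k:ℝ))^(-β) := mul_le_mul_of_nonneg_left h2 hM0.le
    have hraw := nohit_measure_bound μ T hT {y : X | f y ≤ (2:ℝ)^(-(k:ℝ))} ψ K hψL hψ0 hψ1
      hψS Φ hcorr hapos (nn k) (gg k) (hnn1 k) (hgg1 k) D hD0 hD
    -- bound the Lipschitz constant
    have hKcoe : (K:ℝ) = 2/((2:ℝ)^(-(k:ℝ))) * (ℓ:ℝ) := by
      rw [hKdef, NNReal.coe_mul, Real.coe_toNNReal _ (by positivity)]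
    have h2r : 2/((2:ℝ)^(-(k:ℝ))) = (2:ℝ)^((k:ℝ)+1) := by
      rw [show ((k:ℝ)+1) = (1:ℝ) - (-(k:ℝ)) by ring, Real.rpow_sub two_pos, Real.rpow_one]
    have hKub : 1+(K:ℝ) ≤ (2:ℝ)^((k:ℝ)+1)*(1+(ℓ:ℝ)) := by
      rw [hKcoe, h2r]
      have h1 : (1:ℝ) ≤ (2:ℝ)^((k:ℝ)+1) := hone_le _ (by positivity)
      nlinarith [ℓ.coe_nonneg]
    -- term 1
    have hterm1 : 3*((gg k:ℝ))/(((nn k):ℝ) * (∫ y, ψ y ∂μ)) ≤ c1 * ((2:ℝ)^(-ε))^k := by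
      have hnum : 3*((gg k:ℝ)) ≤ 6 * (2:ℝ)^(ε*(k:ℝ)) := by
        have h1 := hggub k
        linarith
      have hden : (2:ℝ)^((d+3*ε)*(k:ℝ)) * (2:ℝ)^((-(k:ℝ)-1)*p)
          ≤ ((nn k):ℝ) * (∫ y, ψ y ∂μ) :=
        mul_le_mul (hnnk k) halow (h2pos _).le (Nat.cast_nonneg _)
      have hdpos : (0:ℝ) < (2:ℝ)^((d+3*ε)*(k:ℝ)) * (2:ℝ)^((-(k:ℝ)-1)*p) := by positivity
      refine le_trans (div_le_div₀ (by positivity) hnum hdpos hden) (le_of_eq ?_)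
      rw [← Real.rpow_add two_pos, hc1def,
        show ((2:ℝ)^(-ε))^k = (2:ℝ)^((-ε)*(k:ℝ)) by
          rw [← Real.rpow_natCast ((2:ℝ)^(-ε)) k, ← Real.rpow_mul (by norm_num : (0:ℝ) ≤ 2)],
        mul_div_assoc, ← Real.rpow_sub two_pos, mul_assoc, ← Real.rpow_add two_pos]
      congr 1
      rw [hpdef]
      ring
    -- term 2
    have hsq2 : ∀ x : ℝ, ((2:ℝ)^x)^(2:ℕ) = (2:ℝ)^(x*2) := by
      intro x
      rw [← Real.rpow_natCast ((2:ℝ)^x) 2, ← Real.rpow_mul (by norm_num : (0:ℝ) ≤ 2)]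
      norm_num
    have hterm2 : D/(∫ y, ψ y ∂μ)^2 ≤ c2 * ((2:ℝ)⁻¹)^k := by
      have hDub : D ≤ ((2:ℝ)^((k:ℝ)+1))^(2:ℕ)*(1+(ℓ:ℝ))^2 * (M * (2:ℝ)^((ε*(k:ℝ))*(-β))) := by
        rw [hDdef]
        have hgb : ((gg k:ℝ))^(-β) ≤ (2:ℝ)^((ε*(k:ℝ))*(-β)) := by
          rw [Real.rpow_mul (by norm_num : (0:ℝ) ≤ 2)]
          rw [Real.rpow_neg hggpos.le, Real.rpow_neg (Real.rpow_nonneg (by norm_num) _)]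
          exact inv_anti₀ (Real.rpow_pos_of_pos (h2pos _) β)
            (Real.rpow_le_rpow (Real.rpow_nonneg (by norm_num) _) (hggk k) hβ0.le)
        have h1K : (0:ℝ) ≤ 1 + (K:ℝ) := by linarith
        have hKK : (1+(K:ℝ))*(1+(K:ℝ)) ≤ ((2:ℝ)^((k:ℝ)+1))^(2:ℕ)*(1+(ℓ:ℝ))^2 := by
          have := mul_le_mul hKub hKub h1K (by positivity)
          calc (1+(K:ℝ))*(1+(K:ℝ)) ≤ ((2:ℝ)^((k:ℝ)+1)*(1+(ℓ:ℝ)))*((2:ℝ)^((k:ℝ)+1)*(1+(ℓ:ℝ))) := this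
            _ = ((2:ℝ)^((k:ℝ)+1))^(2:ℕ)*(1+(ℓ:ℝ))^2 := by ring
        refine mul_le_mul hKK ?_ ?_ (by positivity)
        · exact mul_le_mul_of_nonneg_left hgb hM0.le
        · have := Real.rpow_nonneg hggpos.le (-β)
          positivity
      have hden : ((2:ℝ)^((-(k:ℝ)-1)*p))^(2:ℕ) ≤ (∫ y, ψ y ∂μ)^2 :=
        pow_le_pow_left₀ (h2pos _).le halow 2
      refine le_trans (div_le_div₀ (by positivity) hDub (by positivity) hden) (le_of_eq ?_)
      rw [hsq2, hsq2, hc2def,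
        show ((2:ℝ)⁻¹)^k = (2:ℝ)^(-(1:ℝ)*(k:ℝ)) by
          rw [show (-(1:ℝ)*(k:ℝ)) = -(k:ℝ) by ring, Real.rpow_neg (by norm_num : (0:ℝ) ≤ 2),
            Real.rpow_natCast, inv_pow],
        show (4:ℝ) = (2:ℝ)^(2:ℝ) by
          rw [show (2:ℝ) = ((2:ℕ):ℝ) by norm_num, Real.rpow_natCast]; norm_num]
      rw [div_eq_iff (by positivity : ((2:ℝ)^(((-(k:ℝ)-1)*p)*2)) ≠ 0)]
      have e1 : (2:ℝ)^(((k:ℝ)+1)*2) * (1+(ℓ:ℝ))^2 * (M * (2:ℝ)^(ε*(k:ℝ)*(-β)))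
          = (1+(ℓ:ℝ))^2 * M * (2:ℝ)^(((k:ℝ)+1)*2 + ε*(k:ℝ)*(-β)) := by
        rw [Real.rpow_add two_pos]; ring
      have e2 : (2:ℝ)^(2:ℝ) * (1+(ℓ:ℝ))^2 * M * (2:ℝ)^(2*p) * (2:ℝ)^(-1*(k:ℝ))
            * (2:ℝ)^((-(k:ℝ)-1)*p*2)
          = (1+(ℓ:ℝ))^2 * M * (2:ℝ)^((2:ℝ) + 2*p + (-1*(k:ℝ)) + (-(k:ℝ)-1)*p*2) := by
        rw [Real.rpow_add two_pos, Real.rpow_add two_pos, Real.rpow_add two_pos]; ring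
      rw [e1, e2]
      congr 1
      congr 1
      linear_combination (-(k:ℝ)) * hεβ
    calc (μ (E k)).toReal
        ≤ 3*((gg k:ℝ))/(((nn k):ℝ) * (∫ y, ψ y ∂μ)) + D/(∫ y, ψ y ∂μ)^2 := hraw
      _ ≤ c1 * ((2:ℝ)^(-ε))^k + c2 * ((2:ℝ)⁻¹)^k := add_le_add hterm1 hterm2
  -- summability and Borel–Cantelli
  have hc1 : (0:ℝ) ≤ c1 := by rw [hc1def]; positivity
  have hc2 : (0:ℝ) ≤ c2 := by
    rw [hc2def]
    have := hM0.le
    positivity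
  have hθ1 : (0:ℝ) ≤ (2:ℝ)^(-ε) := (h2pos _).le
  have hθ1' : (2:ℝ)^(-ε) < 1 := Real.rpow_lt_one_of_one_lt_of_neg (by norm_num) (by linarith)
  set u : ℕ → ℝ := fun k => c1 * ((2:ℝ)^(-ε))^k + c2 * ((2:ℝ)⁻¹)^k with hudef
  have hu0 : ∀ k, 0 ≤ u k := by
    intro k
    have h1 : (0:ℝ) ≤ ((2:ℝ)^(-ε))^k := pow_nonneg hθ1 k
    have h2 : (0:ℝ) ≤ ((2:ℝ)⁻¹)^k := by positivity
    positivity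
  have hsummable : Summable u :=
    ((summable_geometric_of_lt_one hθ1 hθ1').mul_left c1).add
      ((summable_geometric_of_lt_one (by norm_num) (by norm_num)).mul_left c2)
  have htsum : (∑' k : ℕ, μ (E (k + k₀))) ≠ ⊤ := by
    have hle : ∀ k : ℕ, μ (E (k + k₀)) ≤ ENNReal.ofReal (u (k + k₀)) := by
      intro k
      rw [← ENNReal.ofReal_toReal (measure_ne_top μ (E (k + k₀)))]
      exact ENNReal.ofReal_le_ofReal (hEbound (k + k₀) (by omega))
    refine ne_top_of_le_ne_top ?_ (ENNReal.tsum_le_tsum hle)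
    rw [← ENNReal.ofReal_tsum_of_nonneg (fun k => hu0 (k + k₀))
      ((_root_.summable_nat_add_iff k₀).2 hsummable)]
    exact ENNReal.ofReal_ne_top
  have hae := MeasureTheory.ae_eventually_notMem htsum
  filter_upwards [hae] with x hx
  refine limsup_le_of_eventual_hit T f x d ε hd0 hε nn hnn1 hnnub ?_
  obtain ⟨Kx, hKx⟩ := eventually_atTop.1 hx
  refine eventually_atTop.2 ⟨Kx + k₀, fun k hk => ?_⟩
  have hxE : x ∉ E k := by
    have := hKx (k - k₀) (by omega)
    rwa [Nat.sub_add_cancel (by omega : k₀ ≤ k)] at this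
  simp only [hEdef, Set.mem_setOf_eq] at hxE
  push_neg at hxE
  obtain ⟨j, hj1, hj2, hj3⟩ := hxE
  refine le_trans (hitTime_le T (by omega : 0 < j) hj3) ?_
  exact_mod_cast hj2
end
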